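/- Let $X \sim \mathrm{Binomial}(r, p)$ with $r$ a positive integer and $0 \le p < 1$. Then $\mathbb{E}\left[\frac{X}{r + 1 - X}\right] \le \frac{p}{1-p}$. -/

import Mathlib

open MeasureTheory Finset

private lemma term_id (r k : ℕ) (p : ℝ) (hp1 : p < 1) (hk : k < r) :
    ((k+1 : ℕ) : ℝ) / ((r:ℝ) + 1 - ((k+1:ℕ):ℝ)) *
      ((r.choose (k+1) : ℝ) * p ^ (k+1) * (1-p) ^ (r - (k+1)))
    = p / (1-p) * ((r.choose k : ℝ) * p ^ k * (1-p) ^ (r-k)) := by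
  have h1p : (1:ℝ) - p ≠ 0 := by linarith
  have hrk : ((r:ℝ) + 1 - ((k+1:ℕ):ℝ)) = ((r - k : ℕ) : ℝ) := by
    push_cast [Nat.cast_sub hk.le]; ring
  have hrk0 : ((r - k : ℕ) : ℝ) ≠ 0 := by
    have : 0 < r - k := Nat.sub_pos_of_lt hk
    positivity
  have hch : (r.choose (k+1) : ℝ) * ((k+1 : ℕ):ℝ) = (r.choose k : ℝ) * ((r - k : ℕ):ℝ) := by
    exact_mod_cast congrArg (Nat.cast : ℕ → ℝ) (Nat.choose_succ_right_eq r k)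
  have hpow : (1-p) ^ (r - k) = (1-p) ^ (r - (k+1)) * (1-p) := by
    rw [← pow_succ]; congr 1; omega
  rw [hrk, hpow]
  field_simp
  push_cast at hch ⊢
  linear_combination (p ^ k * p) * hch

private lemma sum_le (r : ℕ) (p : ℝ) (hp0 : 0 ≤ p) (hp1 : p < 1) :
    ∑ i ∈ range (r+1),
      ((i : ℝ) / ((r:ℝ) + 1 - (i:ℝ))) * ((r.choose i : ℝ) * p ^ i * (1-p) ^ (r - i))
      ≤ p / (1-p) := by
  have hq : (0:ℝ) ≤ 1 - p := by linarith
  rw [Finset.sum_range_succ']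
  simp only [Nat.cast_zero, zero_div, zero_mul, add_zero]
  have : ∀ k ∈ range r,
      ((((k+1:ℕ)) : ℝ) / ((r:ℝ) + 1 - ((k+1:ℕ):ℝ))) *
        ((r.choose (k+1) : ℝ) * p ^ (k+1) * (1-p) ^ (r - (k+1)))
      = p / (1-p) * ((r.choose k : ℝ) * p ^ k * (1-p) ^ (r-k)) := by
    intro k hk
    exact term_id r k p hp1 (Finset.mem_range.mp hk)
  rw [Finset.sum_congr rfl this, ← Finset.mul_sum]
  have hsum : ∑ k ∈ range r, ((r.choose k : ℝ) * p ^ k * (1-p) ^ (r-k)) ≤ 1 := by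
    have hfull : ∑ k ∈ range (r+1), ((r.choose k : ℝ) * p ^ k * (1-p) ^ (r-k)) = 1 := by
      calc ∑ k ∈ range (r+1), ((r.choose k : ℝ) * p ^ k * (1-p) ^ (r-k))
          = (p + (1-p)) ^ r := by
            rw [add_pow]; exact Finset.sum_congr rfl fun k _ => by ring
        _ = 1 := by norm_num
    calc ∑ k ∈ range r, ((r.choose k : ℝ) * p ^ k * (1-p) ^ (r-k))
        ≤ ∑ k ∈ range (r+1), ((r.choose k : ℝ) * p ^ k * (1-p) ^ (r-k)) := by
          apply Finset.sum_le_sum_of_subset_of_nonneg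
            (Finset.range_subset_range.mpr (Nat.le_succ r))
          intro i _ _; positivity
      _ = 1 := hfull
  have hpq : 0 ≤ p / (1-p) := by positivity
  calc p / (1-p) * ∑ k ∈ range r, ((r.choose k : ℝ) * p ^ k * (1-p) ^ (r-k))
      ≤ p / (1-p) * 1 := by
        apply mul_le_mul_of_nonneg_left hsum hpq
    _ = p / (1-p) := mul_one _

theorem binomial_ratio_expectation_le {Ω : Type*} [MeasurableSpace Ω]
    (μ : Measure Ω) [IsProbabilityMeasure μ]
    (r : ℕ) (hr : 0 < r) (p : ℝ) (hp0 : 0 ≤ p) (hp1 : p < 1)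
    (X : Ω → ℕ) (hXmeas : Measurable X)
    (hX : ∀ i : ℕ, μ {ω | X ω = i}
      = ENNReal.ofReal ((r.choose i : ℝ) * p ^ i * (1 - p) ^ (r - i))) :
    ∫ ω, (X ω : ℝ) / ((r : ℝ) + 1 - (X ω : ℝ)) ∂μ ≤ p / (1 - p) := by
  have hq : (0:ℝ) ≤ 1 - p := by linarith
  set f : ℕ → ℝ := fun i => (i:ℝ) / ((r:ℝ) + 1 - (i:ℝ)) with hf
  -- bound on f
  have hfbound : ∀ i : ℕ, ‖f i‖ ≤ (r:ℝ) + 2 := by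
    intro i
    rw [Real.norm_eq_abs]
    rcases le_or_gt i r with h | h
    · have hir : (i:ℝ) ≤ r := by exact_mod_cast h
      have h1 : (1:ℝ) ≤ (r:ℝ) + 1 - i := by linarith
      have hnn : 0 ≤ f i := by
        apply div_nonneg (Nat.cast_nonneg i); linarith
      rw [abs_of_nonneg hnn]
      have : f i ≤ (i:ℝ) := div_le_self (Nat.cast_nonneg i) h1
      linarith
    · rcases eq_or_lt_of_le (Nat.succ_le_of_lt h) with h' | h'
      · have : (i:ℝ) = (r:ℝ) + 1 := by exact_mod_cast h'.symm
        simp only [hf, this]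
        simp
        positivity
      · have hi2 : (r:ℝ) + 2 ≤ i := by exact_mod_cast h'
        have hd : (1:ℝ) ≤ (i:ℝ) - ((r:ℝ)+1) := by linarith
        have hneg : f i ≤ 0 := by
          apply div_nonpos_of_nonneg_of_nonpos (Nat.cast_nonneg i); linarith
        rw [abs_of_nonpos hneg]
        have : -f i = (i:ℝ) / ((i:ℝ) - ((r:ℝ)+1)) := by
          rw [hf]; rw [← div_neg]; congr 1; ring
        rw [this, div_le_iff₀ (by linarith)]
        nlinarith [Nat.cast_nonneg (α := ℝ) r]
  -- integrability
  have hfm : Measurable f := measurable_from_top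
  have hinteg : Integrable (fun ω => f (X ω)) μ :=
    (integrable_const ((r:ℝ) + 2)).mono'
      ((hfm.comp hXmeas).aestronglyMeasurable)
      (ae_of_all _ fun ω => hfbound (X ω))
  have hintmap : Integrable f (μ.map X) := by
    rw [integrable_map_measure hfm.aestronglyMeasurable hXmeas.aemeasurable]
    exact hinteg
  have hmap : ∀ i : ℕ, μ.map X {i} = μ {ω | X ω = i} := by
    intro i
    rw [Measure.map_apply hXmeas (measurableSet_singleton i)]
    rfl
  have key : ∫ ω, f (X ω) ∂μ = ∑' i : ℕ, (μ {ω | X ω = i}).toReal • f i := by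
    rw [← integral_map hXmeas.aemeasurable hfm.aestronglyMeasurable,
      integral_countable' hintmap]
    exact tsum_congr fun i => by rw [measureReal_def, hmap i]
  have hzero : ∀ i ∉ range (r+1), (μ {ω | X ω = i}).toReal • f i = 0 := by
    intro i hi
    have hri : r < i := by simpa [Nat.lt_succ_iff, not_le] using Finset.mem_range.not.mp hi
    have : r.choose i = 0 := Nat.choose_eq_zero_of_lt hri
    rw [hX i, this]
    simp
  have htsum : ∑' i : ℕ, (μ {ω | X ω = i}).toReal • f i
      = ∑ i ∈ range (r+1), (μ {ω | X ω = i}).toReal • f i := tsum_eq_sum hzero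
  have hterm : ∀ i ∈ range (r+1), (μ {ω | X ω = i}).toReal • f i
      = f i * ((r.choose i : ℝ) * p ^ i * (1-p) ^ (r - i)) := by
    intro i _
    rw [hX i, ENNReal.toReal_ofReal (by positivity), smul_eq_mul, mul_comm]
  calc ∫ ω, f (X ω) ∂μ
      = ∑ i ∈ range (r+1), f i * ((r.choose i : ℝ) * p ^ i * (1-p) ^ (r - i)) := by
        rw [key, htsum]; exact Finset.sum_congr rfl hterm
    _ ≤ p / (1-p) := sum_le r p hp0 hp1
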